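/- Let n_0 > 6 be an integer and define φ_n = (1/(nβ)) (β/(1+β))^n for 2 ≤ n ≤ n_0. Then (Jφ)_n = 0 for every 2 ≤ n ≤ n_0, where J = J_+ − J_− is the truncated collision operator; equivalently, the constant-in-time and constant-in-area family f̄_n(a,t) = φ_n solves the system ∂_t f_n + (n−6)∂_a f_n = Γ(t)(Jf)_n for any weight Γ. -/

import Mathlib

open MeasureTheory Set

noncomputable section

namespace GrainGrowth

/-- Collision operator for the infinite system (topological classes `n ≥ 2`):
`(Jf)_2 = 3(β+1)f_3 − 2β f_2`,
`(Jf)_n = (β+1)(n+1)f_{n+1} − (2β+1)n f_n + β(n−1)f_{n−1}` for `n > 2`. -/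
def Jinf (β : ℝ) (f : ℕ → ℝ → ℝ) (n : ℕ) (a : ℝ) : ℝ :=
  if n = 2 then 3 * (β + 1) * f 3 a - 2 * β * f 2 a
  else (β + 1) * ((n : ℝ) + 1) * f (n + 1) a - (2 * β + 1) * (n : ℝ) * f n a
       + β * ((n : ℝ) - 1) * f (n - 1) a

/-- Truncated collision operator `J = J_+ − J_−` for `2 ≤ n ≤ n0`. -/
def Jtr (β : ℝ) (n0 : ℕ) (f : ℕ → ℝ → ℝ) (n : ℕ) (a : ℝ) : ℝ :=
  if n = 2 then 3 * (β + 1) * f 3 a - 2 * β * f 2 a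
  else if n = n0 then
    β * ((n0 : ℝ) - 1) * f (n0 - 1) a - (β + 1) * (n0 : ℝ) * f n0 a
  else (β + 1) * ((n : ℝ) + 1) * f (n + 1) a - (2 * β + 1) * (n : ℝ) * f n a
       + β * ((n : ℝ) - 1) * f (n - 1) a

/-- Gain part `J_+` of the truncated collision operator. -/
def JtrPlus (β : ℝ) (n0 : ℕ) (f : ℕ → ℝ → ℝ) (n : ℕ) (a : ℝ) : ℝ :=
  if n = 2 then 3 * (β + 1) * f 3 a
  else if n = n0 then β * ((n0 : ℝ) - 1) * f (n0 - 1) a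
  else (β + 1) * ((n : ℝ) + 1) * f (n + 1) a + β * ((n : ℝ) - 1) * f (n - 1) a

/-- Loss part `J_−` of the truncated collision operator. -/
def JtrMinus (β : ℝ) (n0 : ℕ) (f : ℕ → ℝ → ℝ) (n : ℕ) (a : ℝ) : ℝ :=
  if n = 2 then 2 * β * f 2 a
  else if n = n0 then (β + 1) * (n0 : ℝ) * f n0 a
  else (2 * β + 1) * (n : ℝ) * f n a

/-- Relaxation constants: `u_2 = 2β`, `u_{n_0} = (β+1)n_0`, `u_n = (2β+1)n` otherwise. -/
def uRelax (β : ℝ) (n0 : ℕ) (n : ℕ) : ℝ :=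
  if n = 2 then 2 * β
  else if n = n0 then (β + 1) * (n0 : ℝ)
  else (2 * β + 1) * (n : ℝ)

/-- The stationary supersolution `φ_n = (1/(nβ))(β/(1+β))^n`. -/
def phiGG (β : ℝ) (n : ℕ) : ℝ := (1 / ((n : ℝ) * β)) * (β / (1 + β)) ^ n

/-- The set of values `|f_n(a)|/φ_n`, `2 ≤ n ≤ n0`, `a ≥ 0`, whose supremum is `⦀f⦀`. -/
def bnormSet (β : ℝ) (n0 : ℕ) (f : ℕ → ℝ → ℝ) : Set ℝ :=
  {r | ∃ n, 2 ≤ n ∧ n ≤ n0 ∧ ∃ a : ℝ, 0 ≤ a ∧ r = |f n a| / phiGG β n}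

/-- Weighted sup norm `⦀f⦀ = sup_{2≤n≤n0} sup_{a≥0} |f_n(a)|/φ_n`. -/
def bnorm (β : ℝ) (n0 : ℕ) (f : ℕ → ℝ → ℝ) : ℝ := sSup (bnormSet β n0 f)

/-- Values `|f_n(a)|/φ_n` for the infinite system. -/
def bnormSetInf (β : ℝ) (f : ℕ → ℝ → ℝ) : Set ℝ :=
  {r | ∃ n, 2 ≤ n ∧ ∃ a : ℝ, 0 ≤ a ∧ r = |f n a| / phiGG β n}

/-- Weighted sup norm for the infinite system. -/
def bnormInf (β : ℝ) (f : ℕ → ℝ → ℝ) : ℝ := sSup (bnormSetInf β f)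

/-- Transport (semigroup) operator: `(T_c(t)u)(a) = u(a − ct)` if `c ≤ 0` or `a ≥ ct`,
and `0` otherwise. -/
def Tc (c : ℝ) (t : ℝ) (u : ℝ → ℝ) (a : ℝ) : ℝ :=
  if c ≤ 0 ∨ c * t ≤ a then u (a - c * t) else 0

/-- Relaxation–transport operators
`(T_Γ^−(s,t)f)_n = exp(−u_n ∫_s^t Γ) · T_{n−6}(t−s) f_n`. -/
def TGm (β : ℝ) (n0 : ℕ) (Γ : ℝ → ℝ) (s t : ℝ) (f : ℕ → ℝ → ℝ) (n : ℕ) (a : ℝ) : ℝ :=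
  Real.exp (-(uRelax β n0 n) * ∫ σ in s..t, Γ σ) * Tc ((n : ℝ) - 6) (t - s) (f n) a

/-- Number of grains `N(f) = Σ_{n=2}^{n0} ∫_0^∞ f_n(a) da`. -/
def Ngr (n0 : ℕ) (f : ℕ → ℝ → ℝ) : ℝ :=
  ∑ n ∈ Finset.Icc 2 n0, ∫ a in Ioi (0 : ℝ), f n a

/-- Total area `A(f) = Σ_{n=2}^{n0} ∫_0^∞ a f_n(a) da`. -/
def Agr (n0 : ℕ) (f : ℕ → ℝ → ℝ) : ℝ :=
  ∑ n ∈ Finset.Icc 2 n0, ∫ a in Ioi (0 : ℝ), a * f n a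

/-- Polyhedral defect `P(f) = Σ_{n=2}^{n0} (n−6) ∫_0^∞ f_n(a) da`. -/
def Pgr (n0 : ℕ) (f : ℕ → ℝ → ℝ) : ℝ :=
  ∑ n ∈ Finset.Icc 2 n0, ((n : ℝ) - 6) * ∫ a in Ioi (0 : ℝ), f n a

/-- `Γ_N(f) = Σ_{n=2}^{5} (n−6)² f_n(0)`. -/
def GammaN (f : ℕ → ℝ → ℝ) : ℝ :=
  ∑ n ∈ Finset.Icc (2 : ℕ) 5, ((n : ℝ) - 6) ^ 2 * f n 0

/-- `Γ_D(f) = −Σ_{n=2}^{n0} n ∫_0^∞ (Jf)_n(a) da`. -/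
def GammaD (β : ℝ) (n0 : ℕ) (f : ℕ → ℝ → ℝ) : ℝ :=
  - ∑ n ∈ Finset.Icc 2 n0, (n : ℝ) * ∫ a in Ioi (0 : ℝ), Jtr β n0 f n a

/-- `Γ(f) = Γ_N(f)/Γ_D(f)`. -/
def GammaW (β : ℝ) (n0 : ℕ) (f : ℕ → ℝ → ℝ) : ℝ := GammaN f / GammaD β n0 f

/-- `Γ̄(t) = sup_{0≤s≤t} Γ(f(s))`. -/
def GammaBar (β : ℝ) (n0 : ℕ) (f : ℝ → ℕ → ℝ → ℝ) (t : ℝ) : ℝ :=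
  sSup ((fun s => GammaW β n0 (f s)) '' Icc 0 t)

/-- First quasi-complement
`N⊥(f,α,ν) = Σ_{n=ν+1}^{n0} ∫_0^α f_n + Σ_{n=2}^{n0} ∫_α^∞ f_n` (with `f_1 ≡ 0`). -/
def NperpGen (n0 : ℕ) (f : ℕ → ℝ → ℝ) (α : ℝ) (ν : ℕ) : ℝ :=
  (∑ n ∈ Finset.Icc (max (ν + 1) 2) n0, ∫ a in (0 : ℝ)..α, f n a)
  + ∑ n ∈ Finset.Icc 2 n0, ∫ a in Ioi α, f n a

/-- `N⊥(f,α) := N⊥(f,α,⌊α⌋)`. -/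
def Nperp (n0 : ℕ) (f : ℕ → ℝ → ℝ) (α : ℝ) : ℝ := NperpGen n0 f α ⌊α⌋₊

/-- Second quasi-complement
`M⊥(f,α) = Σ_{n=⌊α⌋+1}^{n0} n ∫_0^∞ f_n + Σ_{n=2}^{n0} ∫_α^∞ a f_n` (with `f_1 ≡ 0`). -/
def Mperp (n0 : ℕ) (f : ℕ → ℝ → ℝ) (α : ℝ) : ℝ :=
  (∑ n ∈ Finset.Icc (max (⌊α⌋₊ + 1) 2) n0, (n : ℝ) * ∫ a in Ioi (0 : ℝ), f n a)
  + ∑ n ∈ Finset.Icc 2 n0, ∫ a in Ioi α, a * f n a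

/-- Mild solution of the (truncated) approximate system on `[0,T]` with initial data `g`:
a family of bounded functions, continuous in `(t,a)`, satisfying
`f_n(·,t) = T_{n−6}(t)g_n + ∫_0^t T_{n−6}(t−s)[Γ(f(s)) (Jf(s))_n] ds`. -/
def IsMildApprox (β : ℝ) (n0 : ℕ) (T : ℝ) (g : ℕ → ℝ → ℝ) (f : ℝ → ℕ → ℝ → ℝ) : Prop :=
  (∀ n, 2 ≤ n → n ≤ n0 →
      ContinuousOn (fun p : ℝ × ℝ => f p.1 n p.2) (Icc 0 T ×ˢ Ici 0)) ∧
  (∀ t ∈ Icc (0 : ℝ) T, ∀ n, ∃ B, ∀ a, 0 ≤ a → |f t n a| ≤ B) ∧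
  (∀ t ∈ Icc (0 : ℝ) T, ∀ n, 2 ≤ n → n ≤ n0 → ∀ a, 0 ≤ a →
    f t n a = Tc ((n : ℝ) - 6) t (g n) a
      + ∫ s in (0 : ℝ)..t,
          Tc ((n : ℝ) - 6) (t - s) (fun b => GammaW β n0 (f s) * Jtr β n0 (f s) n b) a)

/-- Admissible state for the truncated system: nonnegative, `L¹`-regular with positive
area, zero polyhedral defect, and vanishing boundary values for `n > 6`. -/
def AdmissibleState (n0 : ℕ) (F : ℕ → ℝ → ℝ) : Prop :=
  (∀ n, 2 ≤ n → n ≤ n0 → ∀ a, 0 ≤ a → 0 ≤ F n a) ∧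
  (∀ n, 2 ≤ n → n ≤ n0 → IntegrableOn (fun a => (1 + a) * F n a) (Ioi 0)) ∧
  0 < Agr n0 F ∧ Pgr n0 F = 0 ∧ (∀ n, 6 < n → n ≤ n0 → F n 0 = 0)

/-! Infinite system quantities (sums over `n ≥ 2` realised as `∑'` over `k ↦ k + 2`). -/

/-- `Γ_N(f) = Σ_{n≥2}(n−6)² f_n(0)`. -/
def GammaNInf (f : ℕ → ℝ → ℝ) : ℝ := ∑' k : ℕ, ((k : ℝ) + 2 - 6) ^ 2 * f (k + 2) 0

/-- `Γ_D(f) = Σ_{n≥2} n ∫_0^∞ f_n − 2(β+1) ∫_0^∞ f_2`. -/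
def GammaDInf (β : ℝ) (f : ℕ → ℝ → ℝ) : ℝ :=
  (∑' k : ℕ, ((k : ℝ) + 2) * ∫ a in Ioi (0 : ℝ), f (k + 2) a)
  - 2 * (β + 1) * ∫ a in Ioi (0 : ℝ), f 2 a

/-- `Γ(f) = Γ_N(f)/Γ_D(f)` for the infinite system. -/
def GammaWInf (β : ℝ) (f : ℕ → ℝ → ℝ) : ℝ := GammaNInf f / GammaDInf β f

/-- `N(f) = Σ_{n≥2} ∫_0^∞ f_n`. -/
def NgrInf (f : ℕ → ℝ → ℝ) : ℝ := ∑' k : ℕ, ∫ a in Ioi (0 : ℝ), f (k + 2) a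

/-- `A(f) = Σ_{n≥2} ∫_0^∞ a f_n`. -/
def AgrInf (f : ℕ → ℝ → ℝ) : ℝ := ∑' k : ℕ, ∫ a in Ioi (0 : ℝ), a * f (k + 2) a

/-- `P(f) = Σ_{n≥2} (n−6) ∫_0^∞ f_n`. -/
def PgrInf (f : ℕ → ℝ → ℝ) : ℝ :=
  ∑' k : ℕ, ((k : ℝ) + 2 - 6) * ∫ a in Ioi (0 : ℝ), f (k + 2) a

/-- Second quasi-complement for the infinite system:
`M⊥(f,α) = Σ_{n≥2} ∫_α^∞ a f_n + Σ_{n≥⌊α⌋+1} n ∫_0^∞ f_n`. -/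
def MperpInf (f : ℕ → ℝ → ℝ) (α : ℝ) : ℝ :=
  (∑' k : ℕ, ∫ a in Ioi α, a * f (k + 2) a)
  + ∑' k : ℕ, (if ⌊α⌋₊ + 1 ≤ k + 2 then ((k : ℝ) + 2) * ∫ a in Ioi (0 : ℝ), f (k + 2) a else 0)

/-- Left-shift operator `(S⁺_δ f)(a) = f(a−δ)` for `a ≥ δ` and `0` otherwise. -/
def Splus (δ : ℝ) (f : ℕ → ℝ → ℝ) (n : ℕ) (a : ℝ) : ℝ :=
  if δ ≤ a then f n (a - δ) else 0

/-- Mild solution of the infinite kinetic grain-growth system on `[0,T]`. -/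
def IsMildInf (β : ℝ) (T : ℝ) (g : ℕ → ℝ → ℝ) (f : ℝ → ℕ → ℝ → ℝ) : Prop :=
  (∀ n, 2 ≤ n → ContinuousOn (fun p : ℝ × ℝ => f p.1 n p.2) (Icc 0 T ×ˢ Ici 0)) ∧
  (∀ t ∈ Icc (0 : ℝ) T, BddAbove (bnormSetInf β (f t))) ∧
  (∀ t ∈ Icc (0 : ℝ) T, ∀ n : ℕ, 2 ≤ n →
      IntegrableOn (fun a => ((n : ℝ) + a) * |f t n a|) (Ioi 0)) ∧
  (∀ t ∈ Icc (0 : ℝ) T,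
      Summable (fun k : ℕ => ∫ a in Ioi (0 : ℝ), ((k : ℝ) + 2 + a) * |f t (k + 2) a|)) ∧
  (∀ t ∈ Icc (0 : ℝ) T, ∀ n, 2 ≤ n → ∀ a, 0 ≤ a →
    f t n a = Tc ((n : ℝ) - 6) t (g n) a
      + ∫ s in (0 : ℝ)..t,
          Tc ((n : ℝ) - 6) (t - s) (fun b => GammaWInf β (f s) * Jinf β (f s) n b) a)

/-- Admissible state for the infinite system. -/
def AdmissibleInf (f : ℕ → ℝ → ℝ) : Prop :=
  (∀ n, 2 ≤ n → ∀ a, 0 ≤ a → 0 ≤ f n a) ∧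
  0 < AgrInf f ∧ PgrInf f = 0 ∧ (∀ n, 6 < n → f n 0 = 0)

/-- Regular state: equi-continuous w.r.t. `⦀·⦀` and rapidly decreasing in `n` and `a`. -/
def RegularInf (β : ℝ) (f : ℕ → ℝ → ℝ) : Prop :=
  (∀ ε > (0 : ℝ), ∃ δbar > (0 : ℝ), ∀ δ, 0 ≤ δ → δ ≤ δbar →
      bnormInf β (fun n a => Splus δ f n a - f n a) ≤ ε) ∧
  (∃ d > (0 : ℝ), ∃ D > (0 : ℝ), ∀ α, 0 ≤ α → MperpInf f α ≤ D * Real.exp (-d * α))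

/-- Energy distance
`ℰ(f,g) = Σ_{n≥2} n ∫_0^∞ e^{−a}(f_n−g_n)² da + (N(f)−N(g))²`. -/
def EnergyDist (f g : ℕ → ℝ → ℝ) : ℝ :=
  (∑' k : ℕ, ((k : ℝ) + 2) *
      ∫ a in Ioi (0 : ℝ), Real.exp (-a) * (f (k + 2) a - g (k + 2) a) ^ 2)
  + (NgrInf f - NgrInf g) ^ 2


private lemma phi_mid (β : ℝ) (hβ0 : 0 < β) (m : ℕ) :
    (β + 1) * (((m:ℝ)+3) + 1) * phiGG β (m + 4) - (2 * β + 1) * ((m:ℝ)+3) * phiGG β (m+3)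
       + β * (((m:ℝ)+3) - 1) * phiGG β (m + 2) = 0 := by
  have h1 : (1 : ℝ) + β ≠ 0 := by linarith
  have hb : β ≠ 0 := hβ0.ne'
  simp only [phiGG]
  push_cast
  have h2 : (m:ℝ) + 2 ≠ 0 := by positivity
  have h3 : (m:ℝ) + 3 ≠ 0 := by positivity
  have h4 : (m:ℝ) + 4 ≠ 0 := by positivity
  simp only [div_pow]
  field_simp
  ring

private lemma phi_two (β : ℝ) (hβ0 : 0 < β) :
    3 * (β + 1) * phiGG β 3 - 2 * β * phiGG β 2 = 0 := by
  have h1 : (1 : ℝ) + β ≠ 0 := by linarith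
  have hb : β ≠ 0 := hβ0.ne'
  simp only [phiGG]
  push_cast
  field_simp
  ring

private lemma phi_top (β : ℝ) (hβ0 : 0 < β) (m : ℕ) :
    β * (((m:ℝ)+3) - 1) * phiGG β (m + 2) - (β + 1) * ((m:ℝ)+3) * phiGG β (m+3) = 0 := by
  have h1 : (1 : ℝ) + β ≠ 0 := by linarith
  have hb : β ≠ 0 := hβ0.ne'
  simp only [phiGG]
  push_cast
  have h2 : (m:ℝ) + 2 ≠ 0 := by positivity
  have h3 : (m:ℝ) + 3 ≠ 0 := by positivity
  simp only [div_pow]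
  field_simp
  ring

/-- `φ_n = (1/(nβ))(β/(1+β))^n` satisfies `(Jφ)_n = 0` for all `2 ≤ n ≤ n0`;
equivalently, the constant family `f̄_n(a,t) = φ_n` solves
`∂_t f_n + (n−6)∂_a f_n = Γ(t)(Jf)_n` for any weight `Γ`. -/
theorem phi_in_kernel (β : ℝ) (hβ0 : 0 < β) (hβ2 : β < 2) (n0 : ℕ) (hn0 : 6 < n0) :
    (∀ n, 2 ≤ n → n ≤ n0 → ∀ a : ℝ, Jtr β n0 (fun m _ => phiGG β m) n a = 0) ∧
    (∀ Γ : ℝ → ℝ, ∀ n, 2 ≤ n → n ≤ n0 → ∀ a t : ℝ,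
      deriv (fun _ : ℝ => phiGG β n) t
        + ((n : ℝ) - 6) * deriv (fun _ : ℝ => phiGG β n) a
        = Γ t * Jtr β n0 (fun m _ => phiGG β m) n a) := by
  have hJ : ∀ n, 2 ≤ n → n ≤ n0 → ∀ a : ℝ, Jtr β n0 (fun m _ => phiGG β m) n a = 0 := by
    intro n h2 hle a
    unfold Jtr
    by_cases hn2 : n = 2
    · simp only [hn2, if_pos rfl]
      exact phi_two β hβ0
    · rw [if_neg hn2]
      by_cases hnn0 : n = n0
      · rw [if_pos hnn0]
        obtain ⟨m, rfl⟩ : ∃ m, n0 = m + 3 := ⟨n0 - 3, by omega⟩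
        have : m + 3 - 1 = m + 2 := by omega
        rw [this]
        have := phi_top β hβ0 m
        push_cast at this ⊢
        linarith [this]
      · rw [if_neg hnn0]
        obtain ⟨m, rfl⟩ : ∃ m, n = m + 3 := ⟨n - 3, by omega⟩
        have : m + 3 - 1 = m + 2 := by omega
        rw [this]
        have e4 : m + 3 + 1 = m + 4 := by omega
        rw [e4]
        have := phi_mid β hβ0 m
        push_cast at this ⊢
        linarith [this]
  refine ⟨hJ, fun Γ n h2 hle a t => ?_⟩
  rw [hJ n h2 hle a]
  simp


end GrainGrowth
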